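/- Let M be a finite set and π: M → (0, ∞) a probability distribution (Σ_{X∈M} π(X) = 1). Let T ⊆ M carry an equivalence relation ∼ all of whose classes have the same size α ≥ 1, and for X ∈ T set p(X) = Σ_{Y ∈ T, Y ∼ X} π(Y). Define f(X) = 1/p(X) for X ∈ T and f(X) = 0 otherwise, and g(X) = 1/(α π(X)) for X ∈ T and g(X) = 0 otherwise. Then Var_π[f] ≤ Var_π[g], i.e., Σ_X π(X) f(X)² − (Σ_X π(X) f(X))² ≤ Σ_X π(X) g(X)² − (Σ_X π(X) g(X))². -/

import Mathlib

open Finset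

private lemma css_swap_lemma {M : Type*} [Fintype M] [DecidableEq M]
    (T : Finset M) (r : M → M → Prop) [DecidableRel r]
    (hsymm : ∀ X ∈ T, ∀ Y ∈ T, r X Y → r Y X) (α : ℕ)
    (hclass : ∀ X ∈ T, (T.filter (fun Y => r X Y)).card = α) (h : M → ℝ) :
    ∑ X ∈ T, ∑ Y ∈ T.filter (fun Y => r X Y), h Y = (α : ℝ) * ∑ Y ∈ T, h Y := by
  calc ∑ X ∈ T, ∑ Y ∈ T.filter (fun Y => r X Y), h Y
      = ∑ X ∈ T, ∑ Y ∈ T, if r X Y then h Y else 0 := by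
        refine Finset.sum_congr rfl fun X _ => ?_
        rw [Finset.sum_filter]
    _ = ∑ Y ∈ T, ∑ X ∈ T, if r X Y then h Y else 0 := Finset.sum_comm
    _ = ∑ Y ∈ T, (α : ℝ) * h Y := by
        refine Finset.sum_congr rfl fun Y hY => ?_
        rw [← Finset.sum_filter]
        have hfe : T.filter (fun X => r X Y) = T.filter (fun X => r Y X) := by
          ext X
          simp only [Finset.mem_filter, and_congr_right_iff]
          exact fun hX => ⟨fun h' => hsymm X hX Y hY h', fun h' => hsymm Y hY X hX h'⟩
        rw [hfe, Finset.sum_const, hclass Y hY, nsmul_eq_mul]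
    _ = (α : ℝ) * ∑ Y ∈ T, h Y := by rw [Finset.mul_sum]

/-- variance comparison between the corresponding-state-sampling
reweighting function `f` and the basic reweighting function `g`.  Here `π` is a
positive probability distribution on the finite set `M`, `T ⊆ M` carries an
equivalence relation `r` all of whose classes have size `α ≥ 1`, and for `X ∈ T`,
`p(X) = Σ_{Y ∈ T, Y ∼ X} π(Y)`.  Then `Var_π[f] ≤ Var_π[g]`. -/
theorem css_variance_le_basic_variance
    {M : Type*} [Fintype M] [DecidableEq M] (π : M → ℝ) (hπ : ∀ X : M, 0 < π X)
    (hsum : ∑ X : M, π X = 1)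
    (T : Finset M) (r : M → M → Prop) [DecidableRel r]
    (hrefl : ∀ X ∈ T, r X X)
    (hsymm : ∀ X ∈ T, ∀ Y ∈ T, r X Y → r Y X)
    (htrans : ∀ X ∈ T, ∀ Y ∈ T, ∀ Z ∈ T, r X Y → r Y Z → r X Z)
    (α : ℕ) (hα : 1 ≤ α)
    (hclass : ∀ X ∈ T, (T.filter (fun Y => r X Y)).card = α)
    (f g : M → ℝ)
    (hf : ∀ X : M, f X = if X ∈ T then 1 / ∑ Y ∈ T.filter (fun Y => r X Y), π Y else 0)
    (hg : ∀ X : M, g X = if X ∈ T then 1 / ((α : ℝ) * π X) else 0) :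
    ∑ X : M, π X * f X ^ 2 - (∑ X : M, π X * f X) ^ 2
      ≤ ∑ X : M, π X * g X ^ 2 - (∑ X : M, π X * g X) ^ 2 := by
  have hα0 : (0 : ℝ) < (α : ℝ) := by exact_mod_cast Nat.lt_of_lt_of_le Nat.zero_lt_one hα
  set P : M → ℝ := fun X => ∑ Y ∈ T.filter (fun Y => r X Y), π Y with hPdef
  -- positivity of P on T
  have hP : ∀ X ∈ T, 0 < P X := by
    intro X hX
    refine Finset.sum_pos (fun Y _ => hπ Y) ⟨X, ?_⟩
    simp [Finset.mem_filter, hX, hrefl X hX]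
  -- the class of Y equals the class of X when r X Y
  have hclasseq : ∀ X ∈ T, ∀ Y ∈ T, r X Y →
      T.filter (fun Z => r Y Z) = T.filter (fun Z => r X Z) := by
    intro X hX Y hY hXY
    ext Z
    simp only [Finset.mem_filter, and_congr_right_iff]
    intro hZ
    exact ⟨fun h' => htrans X hX Y hY Z hZ hXY h',
           fun h' => htrans Y hY X hX Z hZ (hsymm X hX Y hY hXY) h'⟩
  have hPconst : ∀ X ∈ T, ∀ Y ∈ T.filter (fun Y => r X Y), P Y = P X := by
    intro X hX Y hY
    rw [Finset.mem_filter] at hY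
    simp only [hPdef]
    rw [hclasseq X hX Y hY.1 hY.2]
  -- reduce all sums over M to sums over T
  have hres : ∀ F G : M → ℝ, (∀ X ∈ T, F X = G X) → (∀ X ∉ T, F X = 0) →
      ∑ X : M, F X = ∑ X ∈ T, G X := by
    intro F G h1 h2
    rw [← Finset.sum_subset (Finset.subset_univ T) (fun X _ hX => h2 X hX)]
    exact Finset.sum_congr rfl h1
  have hfT : ∑ X : M, π X * f X = ∑ X ∈ T, π X / P X := by
    refine hres _ _ (fun X hX => ?_) (fun X hX => ?_)
    · rw [hf X, if_pos hX, mul_one_div]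
    · rw [hf X, if_neg hX, mul_zero]
  have hgT : ∑ X : M, π X * g X = ∑ X ∈ T, 1 / (α : ℝ) := by
    refine hres _ _ (fun X hX => ?_) (fun X hX => ?_)
    · rw [hg X, if_pos hX, mul_one_div, mul_comm (α : ℝ) (π X), div_mul_eq_div_div,
        div_self (hπ X).ne']
    · rw [hg X, if_neg hX, mul_zero]
  have hf2T : ∑ X : M, π X * f X ^ 2 = ∑ X ∈ T, π X / (P X) ^ 2 := by
    refine hres _ _ (fun X hX => ?_) (fun X hX => ?_)
    · rw [hf X, if_pos hX, div_pow, one_pow, mul_one_div]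
    · rw [hf X, if_neg hX]; ring
  have hg2T : ∑ X : M, π X * g X ^ 2 = ∑ X ∈ T, 1 / ((α : ℝ) ^ 2 * π X) := by
    refine hres _ _ (fun X hX => ?_) (fun X hX => ?_)
    · rw [hg X, if_pos hX]
      have := (hπ X).ne'
      field_simp
    · rw [hg X, if_neg hX]; ring
  -- means are equal
  have key1 : (α : ℝ) * ∑ X ∈ T, π X / P X = (T.card : ℝ) := by
    rw [← css_swap_lemma T r hsymm α hclass (fun Y => π Y / P Y)]
    calc ∑ X ∈ T, ∑ Y ∈ T.filter (fun Y => r X Y), π Y / P Y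
        = ∑ X ∈ T, (1 : ℝ) := by
          refine Finset.sum_congr rfl fun X hX => ?_
          have : ∑ Y ∈ T.filter (fun Y => r X Y), π Y / P Y
              = ∑ Y ∈ T.filter (fun Y => r X Y), π Y / P X :=
            Finset.sum_congr rfl fun Y hY => by rw [hPconst X hX Y hY]
          rw [this, ← Finset.sum_div]
          exact div_self (hP X hX).ne'
      _ = (T.card : ℝ) := by rw [Finset.sum_const, nsmul_eq_mul, mul_one]
  have hmean : ∑ X : M, π X * f X = ∑ X : M, π X * g X := by
    rw [hfT, hgT, Finset.sum_const, nsmul_eq_mul]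
    have := key1
    field_simp at this ⊢
    linarith [this]
  -- second moment: α * Σ π/P² = Σ 1/P
  have key2 : (α : ℝ) * ∑ X ∈ T, π X / (P X) ^ 2 = ∑ X ∈ T, 1 / P X := by
    rw [← css_swap_lemma T r hsymm α hclass (fun Y => π Y / (P Y) ^ 2)]
    refine Finset.sum_congr rfl fun X hX => ?_
    have : ∑ Y ∈ T.filter (fun Y => r X Y), π Y / (P Y) ^ 2
        = ∑ Y ∈ T.filter (fun Y => r X Y), π Y / (P X) ^ 2 :=
      Finset.sum_congr rfl fun Y hY => by rw [hPconst X hX Y hY]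
    rw [this, ← Finset.sum_div]
    have hPX := hP X hX
    rw [show (∑ Y ∈ T.filter (fun Y => r X Y), π Y) = P X from rfl]
    rw [sq]
    rw [div_mul_eq_div_div, div_self hPX.ne']
  -- Cauchy–Schwarz per class
  have key3 : ∀ X ∈ T, (α : ℝ) ^ 2 / P X ≤ ∑ Y ∈ T.filter (fun Y => r X Y), 1 / π Y := by
    intro X hX
    set s := T.filter (fun Y => r X Y) with hs
    have hcs := Finset.sum_mul_sq_le_sq_mul_sq s (fun Y => Real.sqrt (π Y))
        (fun Y => 1 / Real.sqrt (π Y))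
    have h1 : ∑ Y ∈ s, Real.sqrt (π Y) * (1 / Real.sqrt (π Y)) = (s.card : ℝ) := by
      rw [Finset.sum_congr rfl (fun Y _ => ?_)]
      · rw [Finset.sum_const, nsmul_eq_mul, mul_one]
      · rw [mul_one_div, div_self (Real.sqrt_ne_zero'.mpr (hπ Y))]
    have h2 : ∑ Y ∈ s, Real.sqrt (π Y) ^ 2 = P X :=
      Finset.sum_congr rfl fun Y _ => Real.sq_sqrt (hπ Y).le
    have h3 : ∑ Y ∈ s, (1 / Real.sqrt (π Y)) ^ 2 = ∑ Y ∈ s, 1 / π Y :=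
      Finset.sum_congr rfl fun Y _ => by
        rw [div_pow, one_pow, Real.sq_sqrt (hπ Y).le]
    rw [h1, h2, h3] at hcs
    rw [hclass X hX] at hcs
    rw [div_le_iff₀ (hP X hX)]
    linarith [hcs]
  -- second moments compare
  have key4 : (α : ℝ) * ∑ X ∈ T, 1 / P X ≤ ∑ X ∈ T, 1 / π X := by
    have h1 : ∑ X ∈ T, (α : ℝ) ^ 2 / P X
        ≤ ∑ X ∈ T, ∑ Y ∈ T.filter (fun Y => r X Y), 1 / π Y :=
      Finset.sum_le_sum key3
    rw [css_swap_lemma T r hsymm α hclass (fun Y => 1 / π Y)] at h1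
    have h2 : ∑ X ∈ T, (α : ℝ) ^ 2 / P X = (α : ℝ) * ((α : ℝ) * ∑ X ∈ T, 1 / P X) := by
      rw [Finset.mul_sum, Finset.mul_sum]
      refine Finset.sum_congr rfl fun X _ => ?_
      ring
    rw [h2] at h1
    exact le_of_mul_le_mul_left h1 hα0
  have hsecond : ∑ X : M, π X * f X ^ 2 ≤ ∑ X : M, π X * g X ^ 2 := by
    rw [hf2T, hg2T]
    have h5 : ∑ X ∈ T, 1 / ((α : ℝ) ^ 2 * π X) = (1 / (α : ℝ) ^ 2) * ∑ X ∈ T, 1 / π X := by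
      rw [Finset.mul_sum]
      refine Finset.sum_congr rfl fun X _ => ?_
      rw [one_div, mul_inv, ← one_div, ← one_div, one_div ((α:ℝ)^2), div_eq_mul_inv]
    rw [h5]
    have h6 : ∑ X ∈ T, π X / P X ^ 2 = (1 / (α : ℝ)) * ∑ X ∈ T, 1 / P X := by
      rw [← key2]; field_simp
    rw [h6]
    rw [div_mul_eq_mul_div, div_mul_eq_mul_div, one_mul, one_mul,
        div_le_div_iff₀ hα0 (by positivity)]
    calc (∑ X ∈ T, 1 / P X) * (α : ℝ) ^ 2
        = (α : ℝ) * ((α : ℝ) * ∑ X ∈ T, 1 / P X) := by ring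
      _ ≤ (α : ℝ) * ∑ X ∈ T, 1 / π X := by
          exact mul_le_mul_of_nonneg_left key4 hα0.le
      _ = (∑ X ∈ T, 1 / π X) * (α : ℝ) := by ring
  rw [hmean]
  linarith [hsecond]
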